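/- arXiv:2002.07101 — 2 statements merged into one kernel-verified Lean document; each statement's English description precedes it below -/
import Mathlib

section
/- (Recursive error bound) Fix a constant c ≥ 0. Suppose for each integer N > 0 one has a finite sequence of reals d₀,…,d_N (depending on N) with d_n ≤ c/N² + (c/N²)·∑_{t=1}^{n-1} ∑_{s=1}^{t} d_s for all 0 ≤ n ≤ N. Then max_{0 ≤ n ≤ N} d_n → 0 as N → ∞. -/
open Finset Filter

/-- Lemma 2 of the paper: if for each `N > 0` the sequence
`d N 0, …, d N N` of nonnegative reals satisfies
`d N n ≤ c/N² + (c/N²) ∑_{t=1}^{n-1} ∑_{s=1}^{t} d N s` for all `n ≤ N`,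
then `max_{0 ≤ n ≤ N} d N n → 0` as `N → ∞`. -/
theorem stmt_3 (c : ℝ) (hc : 0 ≤ c) (d : ℕ → ℕ → ℝ)
    (hnonneg : ∀ N n, 0 ≤ d N n)
    (hrec : ∀ N, 0 < N → ∀ n ≤ N,
      d N n ≤ c / (N : ℝ) ^ 2 +
        (c / (N : ℝ) ^ 2) * ∑ t ∈ Finset.Icc 1 (n - 1), ∑ s ∈ Finset.Icc 1 t, d N s) :
    Tendsto (fun N => (Finset.range (N + 1)).sup' Finset.nonempty_range_add_one (d N))
      atTop (nhds 0) := by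
  have key : ∀ N : ℕ, 0 < N → ∀ n ≤ N, d N n ≤ c * Real.exp c / (N : ℝ) ^ 2 := by
    intro N hN
    have hNpos : (0:ℝ) < (N:ℝ) := by exact_mod_cast hN
    set ε : ℝ := c / (N:ℝ)^2 with hε
    have hεnn : 0 ≤ ε := div_nonneg hc (by positivity)
    set A : ℕ → ℝ := fun n => ∑ t ∈ Finset.Icc 1 n, ∑ s ∈ Finset.Icc 1 t, d N s with hA
    have hAnn : ∀ n, 0 ≤ A n := fun n =>
      Finset.sum_nonneg fun t _ => Finset.sum_nonneg fun s _ => hnonneg N s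
    have hAmono : Monotone A := by
      intro a b hab
      apply Finset.sum_le_sum_of_subset_of_nonneg (Finset.Icc_subset_Icc_right hab)
      intro i _ _
      exact Finset.sum_nonneg fun s _ => hnonneg N s
    have hd : ∀ n ≤ N, d N n ≤ ε * (1 + A (n-1)) := by
      intro n hn
      have h := hrec N hN n hn
      rw [mul_add, mul_one]
      exact h.trans (le_of_eq rfl)
    have hfac : (1:ℝ) + c / N ≥ 1 := by
      have : 0 ≤ c / N := div_nonneg hc hNpos.le
      linarith
    have hbound : ∀ n ≤ N, 1 + A n ≤ (1 + c / N) ^ n := by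
      intro n hn
      induction n with
      | zero => simp [hA]
      | succ m ih =>
        have hm : m ≤ N := Nat.le_of_succ_le hn
        have ihm := ih hm
        have hstep : A (m+1) = A m + ∑ s ∈ Finset.Icc 1 (m+1), d N s := by
          rw [hA]
          exact Finset.sum_Icc_succ_top (by omega) _
        have hsum : ∑ s ∈ Finset.Icc 1 (m+1), d N s ≤ (m+1) * (ε * (1 + A m)) := by
          calc ∑ s ∈ Finset.Icc 1 (m+1), d N s
              ≤ ∑ _s ∈ Finset.Icc 1 (m+1), ε * (1 + A m) := by
                apply Finset.sum_le_sum
                intro s hs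
                simp only [Finset.mem_Icc] at hs
                have h1 : d N s ≤ ε * (1 + A (s-1)) := hd s (le_trans hs.2 hn)
                have h2 : A (s-1) ≤ A m := hAmono (by omega)
                nlinarith
            _ = (m+1) * (ε * (1 + A m)) := by
                rw [Finset.sum_const, Nat.card_Icc]
                simp
        have hNe : ((m:ℝ)+1) * ε ≤ c / N := by
          have h1 : ((m:ℝ)+1) ≤ N := by exact_mod_cast hn
          have h2 : ((m:ℝ)+1) * ε ≤ (N:ℝ) * ε := by nlinarith
          have h3 : (N:ℝ) * ε = c / N := by
            rw [hε]; field_simp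
          linarith
        have h1Am : 0 ≤ 1 + A m := by linarith [hAnn m]
        have : 1 + A (m+1) ≤ (1 + A m) * (1 + c / N) := by
          rw [hstep]
          nlinarith [hsum, hNe, hAnn m, hεnn]
        calc 1 + A (m+1) ≤ (1 + A m) * (1 + c / N) := this
          _ ≤ (1 + c / N) ^ m * (1 + c / N) := by nlinarith
          _ = (1 + c / N) ^ (m+1) := by ring
    intro n hn
    have h1 : d N n ≤ ε * (1 + A (n-1)) := hd n hn
    have h2 : 1 + A (n-1) ≤ (1 + c / N) ^ (n-1) := hbound (n-1) (by omega)
    have h3 : (1 + c / N) ^ (n-1) ≤ (1 + c / N) ^ N :=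
      pow_le_pow_right₀ hfac (by omega)
    have h4 : (1 + c / N) ^ N ≤ Real.exp c := by
      have h5 : (1 + c / N) ≤ Real.exp (c / N) := by
        have := Real.add_one_le_exp (c / N)
        linarith
      calc (1 + c / N) ^ N ≤ (Real.exp (c / N)) ^ N := by
            apply pow_le_pow_left₀ (by linarith) h5
        _ = Real.exp ((N:ℝ) * (c / N)) := by rw [← Real.exp_nat_mul]
        _ = Real.exp c := by rw [mul_div_cancel₀]; exact hNpos.ne'
    calc d N n ≤ ε * (1 + A (n-1)) := h1
      _ ≤ ε * Real.exp c := by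
          apply mul_le_mul_of_nonneg_left _ hεnn
          exact h2.trans (h3.trans h4)
      _ = c * Real.exp c / (N:ℝ)^2 := by rw [hε]; ring
  apply squeeze_zero' (g := fun N : ℕ => c * Real.exp c / (N : ℝ) ^ 2)
  · filter_upwards with N
    exact le_trans (hnonneg N 0) (Finset.le_sup' (d N) (Finset.mem_range.mpr (Nat.succ_pos N)))
  · filter_upwards [eventually_ge_atTop 1] with N hN
    apply Finset.sup'_le
    intro n hn
    simp only [Finset.mem_range] at hn
    exact key N hN n (by omega)
  · apply Tendsto.div_atTop tendsto_const_nhds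
    exact (tendsto_pow_atTop two_ne_zero).comp tendsto_natCast_atTop_atTop
end

section
/- Let D₀ = 0 and D_{n+1} = C + C·∑_{t=1}^{n} ∑_{s=1}^{t} D_s for n ≥ 0, where C > 0. Then for n > 0, D_n = C·(1/((1+a)aⁿ⁻¹) + aⁿ/(1+a)), where a = (2+C+√(C²+4C))/2 is the larger root of x² − (2+C)x + 1 = 0. -/
open Finset Real

/-- closed form for the majorizing recursion `D₀ = 0`,
`D_{n+1} = C + C ∑_{t=1}^{n} ∑_{s=1}^{t} D_s`, with
`a = (2+C+√(C²+4C))/2` the larger root of `x² − (2+C)x + 1 = 0`. -/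
theorem stmt_4 (C : ℝ) (hC : 0 < C) (D : ℕ → ℝ)
    (hD0 : D 0 = 0)
    (hrec : ∀ n : ℕ, D (n + 1) = C + C * ∑ t ∈ Finset.Icc 1 n, ∑ s ∈ Finset.Icc 1 t, D s)
    (a : ℝ) (ha : a = (2 + C + Real.sqrt (C ^ 2 + 4 * C)) / 2) :
    a ^ 2 - (2 + C) * a + 1 = 0 ∧
    ∀ n : ℕ, 0 < n →
      D n = C * (1 / ((1 + a) * a ^ (n - 1)) + a ^ n / (1 + a)) := by
  have hs : Real.sqrt (C ^ 2 + 4 * C) ^ 2 = C ^ 2 + 4 * C := by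
    rw [Real.sq_sqrt]; positivity
  have hquad : a ^ 2 - (2 + C) * a + 1 = 0 := by
    subst ha; nlinarith [hs]
  have hapos : 0 < a := by
    have := Real.sqrt_nonneg (C ^ 2 + 4 * C)
    rw [ha]; linarith
  have hane : a ≠ 0 := ne_of_gt hapos
  have h1a : (1 : ℝ) + a ≠ 0 := by positivity
  refine ⟨hquad, ?_⟩
  set S : ℕ → ℝ := fun n => ∑ s ∈ Finset.Icc 1 n, D s with hS
  have hstep : ∀ n : ℕ, D (n + 2) = D (n + 1) + C * S (n + 1) := by
    intro n
    have h1 := hrec (n + 1)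
    have h2 := hrec n
    rw [Finset.sum_Icc_succ_top (by omega : 1 ≤ n + 1)] at h1
    rw [h1, h2]; ring
  have hSstep : ∀ n : ℕ, S (n + 1) = S n + D (n + 1) := by
    intro n
    exact Finset.sum_Icc_succ_top (by omega) D
  have hdiff : ∀ n : ℕ, D (n + 3) = (2 + C) * D (n + 2) - D (n + 1) := by
    intro n
    have h1 := hstep (n + 1)
    have h3 := hSstep (n + 1)
    have h2 := hstep n
    rw [(rfl : n + 1 + 2 = n + 3), (rfl : n + 1 + 1 = n + 2)] at h1
    rw [(rfl : n + 1 + 1 = n + 2)] at h3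
    rw [h3] at h1
    have h4 : C * S (n + 1) = D (n + 2) - D (n + 1) := by rw [h2]; ring
    rw [h1]
    linarith [h4]
  have hD1 : D 1 = C := by
    have := hrec 0; simpa [hD0] using this
  have hD2 : D 2 = C + C * C := by
    have h := hstep 0
    have hS1 : S 1 = D 1 := by simp [hS]
    rw [hS1, hD1] at h
    linarith [h]
  have key : ∀ n : ℕ,
      D (n + 1) = C * (1 / ((1 + a) * a ^ n) + a ^ (n + 1) / (1 + a)) ∧
      D (n + 2) = C * (1 / ((1 + a) * a ^ (n + 1)) + a ^ (n + 2) / (1 + a)) := by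
    intro n
    induction n with
    | zero =>
      constructor
      · rw [hD1]; field_simp; ring
      · rw [hD2]
        field_simp
        linear_combination (-a - 1) * hquad
    | succ m ih =>
      refine ⟨ih.2, ?_⟩
      have h := hdiff m
      rw [(rfl : m + 1 + 1 = m + 2), (rfl : m + 1 + 2 = m + 3)]
      rw [ih.1, ih.2] at h
      have hx : a ^ m ≠ 0 := pow_ne_zero _ hane
      rw [h]
      rw [show m + 3 = m + 2 + 1 from rfl, pow_succ a (m+2), pow_succ a (m+1),
        pow_succ a m]
      field_simp
      linear_combination (-(1 + a^3 * (a^m)^2)) * hquad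
  intro n hn
  obtain ⟨m, rfl⟩ : ∃ m, n = m + 1 := ⟨n - 1, by omega⟩
  have := (key m).1
  simpa using this
end
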